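/- Let V₁ and V₂ be finite-dimensional real normed spaces, U ⊆ V₂ an open set, μ : V₁ → V₂ a surjective continuous linear map, h : U → V₁ a C¹ map with μ(h(v)) = v for all v ∈ U, and E₁ : V₁ → ℝ a C² function such that DE₁(h(v))(w) = 0 for all v ∈ U and all w ∈ ker μ. Then E₂ := E₁ ∘ h is twice differentiable on U and its second derivative satisfies, for all v ∈ U and all x, y ∈ V₂, D²E₂(v)(x, y) = D²E₁(h(v))(Dh(v)(x), Dh(v)(y)). -/

import Mathlib

/-- If h is a C¹ section of μ on an open set U and DE₁(h(v)) annihilates ker μ on U,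
then E₂ = E₁ ∘ h is twice differentiable on U and
D²E₂(v)(x,y) = D²E₁(h(v))(Dh(v)x, Dh(v)y). -/
theorem stmt_11 {V₁ V₂ : Type*}
    [NormedAddCommGroup V₁] [NormedSpace ℝ V₁] [FiniteDimensional ℝ V₁]
    [NormedAddCommGroup V₂] [NormedSpace ℝ V₂] [FiniteDimensional ℝ V₂]
    (U : Set V₂) (hUopen : IsOpen U) (μ : V₁ →L[ℝ] V₂) (hsurj : Function.Surjective μ)
    (h : V₂ → V₁) (hC1 : ContDiffOn ℝ 1 h U)
    (hsec : ∀ v ∈ U, μ (h v) = v)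
    (E₁ : V₁ → ℝ) (hE₁ : ContDiff ℝ 2 E₁)
    (hcrit : ∀ v ∈ U, ∀ w ∈ LinearMap.ker (μ : V₁ →ₗ[ℝ] V₂), fderiv ℝ E₁ (h v) w = 0) :
    ∀ v ∈ U,
      DifferentiableAt ℝ (fun z => E₁ (h z)) v ∧
      DifferentiableAt ℝ (fderiv ℝ (fun z => E₁ (h z))) v ∧
      (∀ x y : V₂,
        fderiv ℝ (fderiv ℝ (fun z => E₁ (h z))) v x y
          = fderiv ℝ (fderiv ℝ E₁) (h v) (fderiv ℝ h v x) (fderiv ℝ h v y)) := by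
  -- right inverse σ of μ
  obtain ⟨σ₀, hσ₀⟩ := (μ : V₁ →ₗ[ℝ] V₂).exists_rightInverse_of_surjective
    (LinearMap.range_eq_top.mpr hsurj)
  set σ : V₂ →L[ℝ] V₁ := LinearMap.toContinuousLinearMap σ₀ with hσdef
  have hμσ : ∀ y, μ (σ y) = y := fun y => congrArg (fun f => f y) hσ₀
  have hEd : Differentiable ℝ E₁ := hE₁.differentiable (by norm_num)
  have hF : ContDiff ℝ 1 (fderiv ℝ E₁) := hE₁.fderiv_right (by norm_num)
  have hhd : ∀ z ∈ U, DifferentiableAt ℝ h z := fun z hz =>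
    (hC1.differentiableOn one_ne_zero).differentiableAt (hUopen.mem_nhds hz)
  have hE2d : ∀ z ∈ U, DifferentiableAt ℝ (fun z => E₁ (h z)) z := fun z hz =>
    (hEd (h z)).comp z (hhd z hz)
  -- μ ∘ Dh z = id on U
  have hμDh : ∀ z ∈ U, ∀ x, μ (fderiv ℝ h z x) = x := by
    intro z hz x
    have heq : (fun w => μ (h w)) =ᶠ[nhds z] id :=
      Filter.eventuallyEq_of_mem (hUopen.mem_nhds hz) (fun w hw => hsec w hw)
    have h1 : fderiv ℝ (fun w => μ (h w)) z = μ.comp (fderiv ℝ h z) := by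
      have := fderiv_comp (x := z) (μ.differentiableAt (x := h z)) (hhd z hz)
      rw [ContinuousLinearMap.fderiv] at this; exact this
    have h2 : fderiv ℝ (fun w => μ (h w)) z = ContinuousLinearMap.id ℝ V₂ := by
      rw [heq.fderiv_eq, fderiv_id]
    have h3 := h1.symm.trans h2
    calc μ (fderiv ℝ h z x) = (μ.comp (fderiv ℝ h z)) x := rfl
      _ = x := by rw [h3]; rfl
  set G : V₂ → (V₁ →L[ℝ] ℝ) := fun z => fderiv ℝ E₁ (h z) with hGdef
  have hGd : ∀ z ∈ U, DifferentiableAt ℝ G z := fun z hz =>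
    ((hF.differentiable one_ne_zero) (h z)).comp z (hhd z hz)
  -- g = (DE₁ ∘ h) precomposed with σ
  set Φ : (V₁ →L[ℝ] ℝ) →L[ℝ] (V₂ →L[ℝ] ℝ) :=
    (ContinuousLinearMap.compL ℝ V₂ V₁ ℝ).flip σ with hΦdef
  have hΦapp : ∀ (L : V₁ →L[ℝ] ℝ) (y : V₂), Φ L y = L (σ y) := fun L y => rfl
  set g : V₂ → (V₂ →L[ℝ] ℝ) := fun z => Φ (G z) with hgdef
  -- fderiv E₂ = g on U
  have hkerdiff : ∀ z ∈ U, ∀ x, σ x - fderiv ℝ h z x ∈ LinearMap.ker (μ : V₁ →ₗ[ℝ] V₂) := by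
    intro z hz x
    simp [LinearMap.mem_ker, map_sub, hμσ, hμDh z hz]
  have hE2fd : ∀ z ∈ U, fderiv ℝ (fun w => E₁ (h w)) z = g z := by
    intro z hz
    have h1 : fderiv ℝ (fun w => E₁ (h w)) z = (fderiv ℝ E₁ (h z)).comp (fderiv ℝ h z) := by
      have := fderiv_comp (x := z) (hEd (h z)) (hhd z hz)
      exact this
    rw [h1]
    ext x
    have hk := hcrit z hz _ (hkerdiff z hz x)
    have : fderiv ℝ E₁ (h z) (σ x - fderiv ℝ h z x) = 0 := hk
    rw [map_sub] at this
    simp only [ContinuousLinearMap.comp_apply]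
    rw [hgdef]
    simp only [hΦapp]
    linarith [this]
  intro v hv
  -- g differentiable at v, with known derivative
  have hgd : DifferentiableAt ℝ g v := (Φ.differentiableAt).comp v (hGd v hv)
  have hfdG : fderiv ℝ G v = (fderiv ℝ (fderiv ℝ E₁) (h v)).comp (fderiv ℝ h v) := by
    have := fderiv_comp (x := v) ((hF.differentiable one_ne_zero).differentiableAt (x := h v)) (hhd v hv)
    exact this
  have hfdg : fderiv ℝ g v = Φ.comp (fderiv ℝ G v) := by
    have := fderiv_comp (x := v) (Φ.differentiableAt (x := G v)) (hGd v hv)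
    rw [ContinuousLinearMap.fderiv] at this; exact this
  have heq2 : fderiv ℝ (fun z => E₁ (h z)) =ᶠ[nhds v] g :=
    Filter.eventuallyEq_of_mem (hUopen.mem_nhds hv) (fun z hz => hE2fd z hz)
  refine ⟨hE2d v hv, ?_, ?_⟩
  · exact hgd.congr_of_eventuallyEq heq2
  · intro x y
    -- D² of annihilation of ker μ
    have hker2 : ∀ k ∈ LinearMap.ker (μ : V₁ →ₗ[ℝ] V₂), fderiv ℝ (fderiv ℝ E₁) (h v) (fderiv ℝ h v x) k = 0 := by
      intro k hk
      set ev : (V₁ →L[ℝ] ℝ) →L[ℝ] ℝ := ContinuousLinearMap.apply ℝ ℝ k with hevdef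
      have hψeq : (fun z => ev (G z)) =ᶠ[nhds v] (fun _ => (0 : ℝ)) :=
        Filter.eventuallyEq_of_mem (hUopen.mem_nhds hv) (fun z hz => hcrit z hz k hk)
      have hψfd : fderiv ℝ (fun z => ev (G z)) v = ev.comp (fderiv ℝ G v) := by
        have := fderiv_comp (x := v) (ev.differentiableAt (x := G v)) (hGd v hv)
        rw [ContinuousLinearMap.fderiv] at this; exact this
      have hψ0 : fderiv ℝ (fun z => ev (G z)) v = 0 := by
        rw [hψeq.fderiv_eq]; exact fderiv_const_apply 0
      have := hψfd.symm.trans hψ0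
      have happ : ev.comp (fderiv ℝ G v) x = 0 := by rw [this]; rfl
      rw [hfdG] at happ
      simpa [hevdef, ContinuousLinearMap.apply_apply] using happ
    have hstep : fderiv ℝ (fderiv ℝ (fun z => E₁ (h z))) v x y = fderiv ℝ g v x y := by
      rw [heq2.fderiv_eq]
    rw [hstep, hfdg]
    have : (Φ.comp (fderiv ℝ G v)) x y = (fderiv ℝ G v x) (σ y) := rfl
    rw [this, hfdG]
    simp only [ContinuousLinearMap.comp_apply]
    have hsub := hker2 _ (hkerdiff v hv y)
    rw [map_sub] at hsub
    linarith [hsub]
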